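/- Let n and i be integers with 1 ≤ i < n−3. Then for every integer N there exist an integer m with m ≥ N and m > n, and rational numbers q_1, …, q_m, such that: (i) Σ_{k=1}^{m} C(m,k)·k^j·q_k = 0 for every j ∈ {1, 2, …, n} \ {i}; and (ii) Σ_{l=1}^{n} C(n,l)·l^{i+3}·( Σ_{j=0}^{m−n} C(m−n,j)·q_{l+j} ) ≠ 0. -/

import Mathlib

open Finset Polynomial

/-- The hypergeometric / two-subsets binomial identity. -/
lemma stmt8_hyper {l k n m : ℕ} (hl : 1 ≤ l) (hlk : l ≤ k) (hkn : k ≤ n) (hnm : 2*n ≤ m) :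
    (n.choose l : ℚ) * ((m - n).choose (k - l) : ℚ) * (m.choose n : ℚ) =
    (k.choose l : ℚ) * ((m - k).choose (n - l) : ℚ) * (m.choose k : ℚ) := by
  have h1 : l ≤ n := le_trans hlk hkn
  have h2 : k - l ≤ m - n := by omega
  have h3 : n ≤ m := by omega
  have h4 : n - l ≤ m - k := by omega
  have h5 : k ≤ m := by omega
  rw [Nat.cast_choose ℚ h1, Nat.cast_choose ℚ h2, Nat.cast_choose ℚ h3,
    Nat.cast_choose ℚ hlk, Nat.cast_choose ℚ h4, Nat.cast_choose ℚ h5]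
  have e1 : m - n - (k - l) = m - k - (n - l) := by omega
  rw [e1]
  have ne : ∀ a : ℕ, ((Nat.factorial a : ℕ) : ℚ) ≠ 0 :=
    fun a => Nat.cast_ne_zero.2 (Nat.factorial_ne_zero a)
  field_simp

/-- A dual-basis vector for the power functionals, via Lagrange interpolation. -/
lemma stmt8_delta (n i : ℕ) (hi : 1 ≤ i) (hin : i + 4 ≤ n) :
    ∃ x : ℕ → ℚ, ∀ j : ℕ, 1 ≤ j → j ≤ n →
      ∑ t ∈ Finset.Icc 1 n, (t:ℚ)^j * x t = if j = i then 1 else 0 := by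
  set v : ℕ → ℚ := fun t => (t:ℚ) with hv
  set s : Finset ℕ := Finset.range (n+1) with hs
  refine ⟨fun t => (Lagrange.basis s v t).coeff i, ?_⟩
  intro j hj1 hjn
  have hinj : Set.InjOn v s := fun a _ b _ h => Nat.cast_injective h
  have hdeg : (X ^ j : ℚ[X]).degree < #s := by
    rw [degree_X_pow, hs, Finset.card_range]
    exact_mod_cast Nat.lt_succ_of_le hjn
  have heq := Lagrange.eq_interpolate (f := (X ^ j : ℚ[X])) hinj hdeg
  have hcoeff := congrArg (fun p => Polynomial.coeff p i) heq
  simp only [Lagrange.interpolate_apply, Polynomial.finset_sum_coeff,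
    Polynomial.coeff_C_mul, Polynomial.coeff_X_pow, Polynomial.eval_pow,
    Polynomial.eval_X] at hcoeff
  have hshrink : ∑ t ∈ s, v t ^ j * (Lagrange.basis s v t).coeff i
      = ∑ t ∈ Finset.Icc 1 n, v t ^ j * (Lagrange.basis s v t).coeff i := by
    refine (Finset.sum_subset ?_ ?_).symm
    · intro t ht
      simp only [hs, Finset.mem_range]
      simp only [Finset.mem_Icc] at ht
      omega
    · intro t ht ht'
      simp only [hs, Finset.mem_range] at ht
      simp only [Finset.mem_Icc] at ht'
      have : t = 0 := by omega
      simp [this, hv, zero_pow (by omega : j ≠ 0)]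
  rw [hshrink] at hcoeff
  rw [← hcoeff]
  by_cases h : j = i
  · simp [h]
  · rw [if_neg h, if_neg (fun hh => h hh.symm)]

/-- Value of the key quantity at `m = n + 1`. -/
lemma stmt8_val (n i : ℕ) (hi : 1 ≤ i) (hn : i + 4 ≤ n) (x : ℕ → ℚ)
    (hx : ∀ j : ℕ, 1 ≤ j → j ≤ n →
      ∑ t ∈ Finset.Icc 1 n, (t:ℚ)^j * x t = if j = i then 1 else 0) :
    ∑ k ∈ Finset.Icc 1 n, x k * ∑ l ∈ Finset.Icc 1 n,
        (l:ℚ)^(i+3) * (k.choose l : ℚ) * ((((n+1)-k).choose (n-l) : ℚ))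
    = ((i+3).choose (i-1) : ℚ) := by
  have hinner : ∀ k ∈ Finset.Icc 1 n,
      ∑ l ∈ Finset.Icc 1 n, (l:ℚ)^(i+3) * (k.choose l : ℚ) * (((n+1-k).choose (n-l) : ℚ))
      = ((n:ℚ)+1-(k:ℚ)) * (k:ℚ)^(i+3) + (k:ℚ) * ((k:ℚ)-1)^(i+3) := by
    intro k hk
    obtain ⟨hk1, hkn⟩ := Finset.mem_Icc.1 hk
    have hstep : ∑ l ∈ Finset.Icc 1 n, (l:ℚ)^(i+3) * (k.choose l : ℚ) * (((n+1-k).choose (n-l) : ℚ))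
        = ∑ l ∈ Finset.Icc 1 n ∩ {k-1, k}, (l:ℚ)^(i+3) * (k.choose l : ℚ) * (((n+1-k).choose (n-l) : ℚ)) := by
      refine (Finset.sum_subset Finset.inter_subset_left ?_).symm
      intro l hl hl'
      obtain ⟨hl1, hln⟩ := Finset.mem_Icc.1 hl
      have hne1 : l ≠ k - 1 := fun h => hl' (Finset.mem_inter.2 ⟨hl, by simp [h]⟩)
      have hne2 : l ≠ k := fun h => hl' (Finset.mem_inter.2 ⟨hl, by simp [h]⟩)
      rcases Nat.lt_or_ge k l with hlt | hge
      · simp [Nat.choose_eq_zero_of_lt hlt]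
      · have : n + 1 - k < n - l := by omega
        simp [Nat.choose_eq_zero_of_lt this]
    rw [hstep]
    rcases Nat.eq_or_lt_of_le hk1 with hk1' | hk2
    · -- k = 1
      have hk1'' : k = 1 := hk1'.symm
      subst hk1''
      have hS : Finset.Icc 1 n ∩ {0, 1} = ({1} : Finset ℕ) := by
        ext t
        simp only [Finset.mem_inter, Finset.mem_Icc, Finset.mem_insert, Finset.mem_singleton]
        omega
      simp only [show (1:ℕ) - 1 = 0 from rfl] at hS ⊢
      rw [hS, Finset.sum_singleton]
      have e1 : n + 1 - 1 = n := by omega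
      have e2 : n.choose (n-1) = n := by
        rw [Nat.choose_symm (by omega : 1 ≤ n), Nat.choose_one_right]
      rw [e1, e2]
      push_cast
      ring_nf
      simp [zero_pow (by omega : i + 3 ≠ 0)]
    · -- 2 ≤ k
      obtain ⟨k', rfl⟩ : ∃ k', k = k' + 1 := ⟨k-1, by omega⟩
      have hS : Finset.Icc 1 n ∩ {k'+1-1, k'+1} = ({k', k'+1} : Finset ℕ) := by
        ext t
        simp only [Finset.mem_inter, Finset.mem_Icc, Finset.mem_insert, Finset.mem_singleton]
        omega
      rw [hS, Finset.sum_pair (by omega : k' ≠ k' + 1)]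
      have e1 : (k'+1).choose k' = k' + 1 := Nat.choose_succ_self_right k'
      have e2 : n + 1 - (k'+1) = n - k' := by omega
      have e3 : (n - k').choose (n - k') = 1 := Nat.choose_self _
      have e4 : (n - k').choose (n - (k'+1)) = n - k' := by
        rw [show n - (k'+1) = (n - k') - 1 by omega,
          Nat.choose_symm (by omega : 1 ≤ n - k'), Nat.choose_one_right]
      have e5 : (k'+1).choose (k'+1) = 1 := Nat.choose_self _
      rw [e2, e1, e3, e4, e5]
      have c1 : ((n - k' : ℕ) : ℚ) = (n:ℚ) - k' := by
        rw [Nat.cast_sub (by omega)]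
      push_cast [c1]
      ring
  rw [Finset.sum_congr rfl (fun k hk => by rw [hinner k hk])]
  have expand : ∀ k : ℕ, x k * (((n:ℚ)+1-k) * (k:ℚ)^(i+3) + (k:ℚ) * ((k:ℚ)-1)^(i+3))
      = ((n:ℚ)+1) * ((k:ℚ)^(i+3) * x k) - ((k:ℚ)^(i+4) * x k)
        + ∑ r ∈ Finset.range (i+4), ((-1:ℚ)^(r+(i+3)) * ((i+3).choose r : ℚ)) * ((k:ℚ)^(r+1) * x k) := by
    intro k
    rw [sub_pow, Finset.mul_sum, mul_add, Finset.mul_sum]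
    rw [Finset.sum_congr rfl (fun r _ => by rw [one_pow]; ring :
      ∀ r ∈ Finset.range (i+3+1), x k * ((k:ℚ) * ((-1:ℚ)^(r+(i+3)) * (k:ℚ)^r * (1:ℚ)^((i+3)-r) * ((i+3).choose r : ℚ)))
        = ((-1:ℚ)^(r+(i+3)) * ((i+3).choose r : ℚ)) * ((k:ℚ)^(r+1) * x k))]
    ring
  rw [Finset.sum_congr rfl (fun k _ => expand k)]
  rw [Finset.sum_add_distrib, Finset.sum_sub_distrib, ← Finset.mul_sum]
  have h1 : ∑ k ∈ Finset.Icc 1 n, (k:ℚ)^(i+3) * x k = 0 := by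
    rw [hx (i+3) (by omega) (by omega), if_neg (by omega : ¬ i+3 = i)]
  have h2 : ∑ k ∈ Finset.Icc 1 n, (k:ℚ)^(i+4) * x k = 0 := by
    rw [hx (i+4) (by omega) (by omega), if_neg (by omega : ¬ i+4 = i)]
  rw [h1, h2, mul_zero, sub_zero, zero_add]
  rw [Finset.sum_comm]
  rw [Finset.sum_congr rfl (fun r hr => by
    rw [← Finset.mul_sum, hx (r+1) (by omega) (by
      have := Finset.mem_range.1 hr; omega)] :
    ∀ r ∈ Finset.range (i+4), ∑ k ∈ Finset.Icc 1 n,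
        ((-1:ℚ)^(r+(i+3)) * ((i+3).choose r : ℚ)) * ((k:ℚ)^(r+1) * x k)
      = ((-1:ℚ)^(r+(i+3)) * ((i+3).choose r : ℚ)) * (if r+1 = i then 1 else 0))]
  rw [Finset.sum_congr rfl (fun r _ => by
    by_cases h : r = i - 1
    · rw [if_pos (by omega), if_pos h, mul_one]
    · rw [if_neg (by omega), if_neg h, mul_zero] :
    ∀ r ∈ Finset.range (i+4),
      ((-1:ℚ)^(r+(i+3)) * ((i+3).choose r : ℚ)) * (if r+1 = i then 1 else 0)
        = if r = i-1 then ((-1:ℚ)^(r+(i+3)) * ((i+3).choose r : ℚ)) else 0)]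
  rw [Finset.sum_ite_eq' (Finset.range (i+4)) (i-1)
    (fun r => ((-1:ℚ)^(r+(i+3)) * ((i+3).choose r : ℚ))),
    if_pos (Finset.mem_range.2 (by omega))]
  rw [show (i-1)+(i+3) = 2*(i+1) by omega, pow_mul, neg_one_sq, one_pow, one_mul]

/-- Choice of a suitable large `m`. -/
lemma stmt8_choose_m (n i N : ℕ) (hi : 1 ≤ i) (hn : i + 4 ≤ n) (x : ℕ → ℚ)
    (hx : ∀ j : ℕ, 1 ≤ j → j ≤ n →
      ∑ t ∈ Finset.Icc 1 n, (t:ℚ)^j * x t = if j = i then 1 else 0) :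
    ∃ m : ℕ, N ≤ m ∧ 2*n ≤ m ∧
      ∑ k ∈ Finset.Icc 1 n, x k * ∑ l ∈ Finset.Icc 1 n,
        (l:ℚ)^(i+3) * (k.choose l : ℚ) * (((m-k).choose (n-l) : ℚ)) ≠ 0 := by
  set P : ℚ[X] := ∑ k ∈ Finset.Icc 1 n, ∑ l ∈ Finset.Icc 1 n,
      Polynomial.C (x k * (l:ℚ)^(i+3) * (k.choose l : ℚ) / ((Nat.factorial (n-l) : ℕ) : ℚ)) *
        ((descPochhammer ℚ (n-l)).comp (Polynomial.X - Polynomial.C (k:ℚ))) with hP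
  have hPeval : ∀ m : ℕ, n ≤ m → P.eval (m:ℚ) =
      ∑ k ∈ Finset.Icc 1 n, x k * ∑ l ∈ Finset.Icc 1 n,
        (l:ℚ)^(i+3) * (k.choose l : ℚ) * (((m-k).choose (n-l) : ℚ)) := by
    intro m hm
    rw [hP, eval_finset_sum]
    refine Finset.sum_congr rfl (fun k hk => ?_)
    rw [eval_finset_sum, Finset.mul_sum]
    refine Finset.sum_congr rfl (fun l hl => ?_)
    simp only [eval_mul, eval_C, eval_comp, eval_sub, eval_X]
    have hkm : k ≤ m := le_trans (Finset.mem_Icc.1 hk).2 hm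
    have hcast : (m:ℚ) - (k:ℚ) = ((m - k : ℕ) : ℚ) := by
      rw [Nat.cast_sub hkm]
    rw [hcast, descPochhammer_eval_eq_descFactorial, Nat.descFactorial_eq_factorial_mul_choose]
    have hfact : (((n-l).factorial : ℕ) : ℚ) ≠ 0 := Nat.cast_ne_zero.2 (Nat.factorial_ne_zero _)
    push_cast
    field_simp
  have hval_n1 : P.eval ((n+1 : ℕ) : ℚ) = ((i+3).choose (i-1) : ℚ) := by
    rw [hPeval (n+1) (by omega)]
    exact stmt8_val n i hi hn x hx
  have hP0 : P ≠ 0 := by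
    intro h
    rw [h, eval_zero] at hval_n1
    have : 0 < (i+3).choose (i-1) := Nat.choose_pos (by omega)
    rw [eq_comm, Nat.cast_eq_zero] at hval_n1
    omega
  by_contra h
  push_neg at h
  apply hP0
  apply Polynomial.eq_zero_of_infinite_isRoot
  apply Set.infinite_of_injective_forall_mem (f := fun t : ℕ => ((N + 2*n + t : ℕ) : ℚ))
  · intro a b hab
    have : N + 2*n + a = N + 2*n + b := Nat.cast_injective (R := ℚ) hab
    omega
  · intro t
    have : P.eval ((N + 2*n + t : ℕ) : ℚ) = 0 := by
      rw [hPeval _ (by omega)]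
      exact h _ (by omega) (by omega)
    exact this

/-- Condition (i). -/
lemma stmt8_cond1 (n i m : ℕ) (hnm : n < m) (x : ℕ → ℚ)
    (hx : ∀ j : ℕ, 1 ≤ j → j ≤ n →
      ∑ t ∈ Finset.Icc 1 n, (t:ℚ)^j * x t = if j = i then 1 else 0) :
    ∀ j : ℕ, 1 ≤ j → j ≤ n → j ≠ i →
      ∑ k ∈ Finset.Icc 1 m, (m.choose k : ℚ) * (k : ℚ) ^ j *
        (if k ≤ n then x k / (m.choose k : ℚ) else 0) = 0 := by
  intro j hj1 hjn hji
  have hshrink : ∑ k ∈ Finset.Icc 1 m, (m.choose k : ℚ) * (k : ℚ) ^ j *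
        (if k ≤ n then x k / (m.choose k : ℚ) else 0)
      = ∑ k ∈ Finset.Icc 1 n, (m.choose k : ℚ) * (k : ℚ) ^ j *
        (if k ≤ n then x k / (m.choose k : ℚ) else 0) := by
    refine (Finset.sum_subset (Finset.Icc_subset_Icc_right hnm.le) ?_).symm
    intro k hk hk'
    simp only [Finset.mem_Icc] at hk hk'
    rw [if_neg (by omega), mul_zero]
  rw [hshrink]
  rw [Finset.sum_congr rfl (fun k hk => by
    obtain ⟨hk1, hkn⟩ := Finset.mem_Icc.1 hk
    have hc : (m.choose k : ℚ) ≠ 0 :=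
      Nat.cast_ne_zero.2 (Nat.choose_pos (by omega : k ≤ m)).ne'
    rw [if_pos hkn]
    field_simp :
    ∀ k ∈ Finset.Icc 1 n, (m.choose k : ℚ) * (k : ℚ) ^ j *
        (if k ≤ n then x k / (m.choose k : ℚ) else 0) = (k:ℚ)^j * x k)]
  rw [hx j hj1 hjn, if_neg hji]

/-- Condition (ii). -/
lemma stmt8_cond2 (n i m : ℕ) (hi : 1 ≤ i) (hn : i + 4 ≤ n) (hm2n : 2*n ≤ m) (x : ℕ → ℚ)
    (hPm : ∑ k ∈ Finset.Icc 1 n, x k * ∑ l ∈ Finset.Icc 1 n,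
        (l:ℚ)^(i+3) * (k.choose l : ℚ) * (((m-k).choose (n-l) : ℚ)) ≠ 0) :
    ∑ l ∈ Finset.Icc 1 n, (n.choose l : ℚ) * (l : ℚ) ^ (i + 3) *
        (∑ j ∈ Finset.range (m - n + 1), ((m - n).choose j : ℚ) *
          (if l + j ≤ n then x (l+j) / (m.choose (l+j) : ℚ) else 0)) ≠ 0 := by
  have hnm : n < m := by omega
  have hcn : (m.choose n : ℚ) ≠ 0 :=
    Nat.cast_ne_zero.2 (Nat.choose_pos (by omega : n ≤ m)).ne'
  have step1 : ∀ l ∈ Finset.Icc 1 n,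
      ∑ j ∈ Finset.range (m - n + 1), ((m - n).choose j : ℚ) *
          (if l + j ≤ n then x (l+j) / (m.choose (l+j) : ℚ) else 0)
      = ∑ k ∈ Finset.Icc l n, ((m-n).choose (k-l) : ℚ) * (x k / (m.choose k : ℚ)) := by
    intro l hl
    obtain ⟨hl1, hln⟩ := Finset.mem_Icc.1 hl
    rw [← Finset.Ico_add_one_right_eq_Icc, Finset.sum_Ico_eq_sum_range]
    have hshrink : ∑ j ∈ Finset.range (m - n + 1), ((m - n).choose j : ℚ) *
          (if l + j ≤ n then x (l+j) / (m.choose (l+j) : ℚ) else 0)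
        = ∑ j ∈ Finset.range (n + 1 - l), ((m - n).choose j : ℚ) *
          (if l + j ≤ n then x (l+j) / (m.choose (l+j) : ℚ) else 0) := by
      refine (Finset.sum_subset (Finset.range_subset_range.2 (by omega)) ?_).symm
      intro j hj hj'
      simp only [Finset.mem_range] at hj hj'
      rw [if_neg (by omega), mul_zero]
    rw [hshrink]
    refine Finset.sum_congr rfl (fun r hr => ?_)
    have hr' := Finset.mem_range.1 hr
    rw [if_pos (by omega), show l + r - l = r by omega]
  rw [Finset.sum_congr rfl (fun l hl => by rw [step1 l hl])]
  have step2 : ∑ l ∈ Finset.Icc 1 n, (n.choose l : ℚ) * (l : ℚ) ^ (i + 3) *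
        ∑ k ∈ Finset.Icc l n, ((m-n).choose (k-l) : ℚ) * (x k / (m.choose k : ℚ))
      = ∑ k ∈ Finset.Icc 1 n, ∑ l ∈ Finset.Icc 1 k,
          (n.choose l : ℚ) * (l : ℚ) ^ (i + 3) *
            (((m-n).choose (k-l) : ℚ) * (x k / (m.choose k : ℚ))) := by
    simp only [Finset.mul_sum, ← Finset.Ico_add_one_right_eq_Icc]
    exact Finset.sum_Ico_Ico_comm 1 (n+1) _
  rw [step2]
  have step3 : ∀ k ∈ Finset.Icc 1 n,
      ∑ l ∈ Finset.Icc 1 k, (n.choose l : ℚ) * (l : ℚ) ^ (i + 3) *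
            (((m-n).choose (k-l) : ℚ) * (x k / (m.choose k : ℚ)))
      = (x k * ∑ l ∈ Finset.Icc 1 n,
          (l:ℚ)^(i+3) * (k.choose l : ℚ) * (((m-k).choose (n-l) : ℚ))) * (1 / (m.choose n : ℚ)) := by
    intro k hk
    obtain ⟨hk1, hkn⟩ := Finset.mem_Icc.1 hk
    have hck : (m.choose k : ℚ) ≠ 0 :=
      Nat.cast_ne_zero.2 (Nat.choose_pos (by omega : k ≤ m)).ne'
    have hper : ∀ l ∈ Finset.Icc 1 k,
        (n.choose l : ℚ) * (l : ℚ) ^ (i + 3) *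
            (((m-n).choose (k-l) : ℚ) * (x k / (m.choose k : ℚ)))
        = ((l:ℚ)^(i+3) * (k.choose l : ℚ) * (((m-k).choose (n-l) : ℚ)) * x k) * (1 / (m.choose n : ℚ)) := by
      intro l hl
      obtain ⟨hl1, hlk⟩ := Finset.mem_Icc.1 hl
      have h := stmt8_hyper hl1 hlk hkn hm2n
      field_simp
      linear_combination (x k) * h
    rw [Finset.sum_congr rfl hper]
    have hext : ∑ l ∈ Finset.Icc 1 k,
        ((l:ℚ)^(i+3) * (k.choose l : ℚ) * (((m-k).choose (n-l) : ℚ)) * x k) * (1 / (m.choose n : ℚ))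
        = ∑ l ∈ Finset.Icc 1 n,
        ((l:ℚ)^(i+3) * (k.choose l : ℚ) * (((m-k).choose (n-l) : ℚ)) * x k) * (1 / (m.choose n : ℚ)) := by
      refine Finset.sum_subset (Finset.Icc_subset_Icc_right hkn) ?_
      intro l hl hl'
      simp only [Finset.mem_Icc] at hl hl'
      rw [Nat.choose_eq_zero_of_lt (by omega : k < l)]
      push_cast
      ring
    rw [hext, ← Finset.sum_mul, ← Finset.sum_mul, Finset.mul_sum]
    ring_nf
    rw [Finset.mul_sum]
    rw [Finset.sum_mul, Finset.sum_mul]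
    exact Finset.sum_congr rfl (fun _ _ => by ring)
  rw [Finset.sum_congr rfl step3, ← Finset.sum_mul]
  exact mul_ne_zero hPm (one_div_ne_zero hcn)

/-- Let `1 ≤ i < n−3`.  Then for every `N` there exist `m ≥ N` with `m > n` and rationals
`q₁, …, q_m` such that (i) `Σ_{k=1}^{m} C(m,k)·k^j·q_k = 0` for every
`j ∈ {1, …, n} \ {i}`, and (ii)
`Σ_{l=1}^{n} C(n,l)·l^{i+3}·( Σ_{j=0}^{m−n} C(m−n,j)·q_{l+j} ) ≠ 0`. -/
theorem stmt8 (n i : ℕ) (hi : 1 ≤ i) (hin : i < n - 3) :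
    ∀ N : ℕ, ∃ m : ℕ, ∃ q : ℕ → ℚ, N ≤ m ∧ n < m ∧
      (∀ j : ℕ, 1 ≤ j → j ≤ n → j ≠ i →
        ∑ k ∈ Finset.Icc 1 m, (m.choose k : ℚ) * (k : ℚ) ^ j * q k = 0) ∧
      (∑ l ∈ Finset.Icc 1 n, (n.choose l : ℚ) * (l : ℚ) ^ (i + 3) *
        (∑ j ∈ Finset.range (m - n + 1), ((m - n).choose j : ℚ) * q (l + j)) ≠ 0) := by
  intro N
  have hn : i + 4 ≤ n := by omega
  obtain ⟨x, hx⟩ := stmt8_delta n i hi hn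
  obtain ⟨m, hmN, hm2n, hPm⟩ := stmt8_choose_m n i N hi hn x hx
  have hnm : n < m := by omega
  refine ⟨m, fun k => if k ≤ n then x k / (m.choose k : ℚ) else 0, hmN, hnm, ?_, ?_⟩
  · exact stmt8_cond1 n i m hnm x hx
  · exact stmt8_cond2 n i m hi hn hm2n x hPm
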